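/- arXiv:1811.00589 — 5 statements merged into one kernel-verified Lean document; each statement's English description precedes it below -/
import Mathlib

section
/- Let C ⊆ (ZMod 3)^c be a self-dual ternary code. Then the lattice Λ(C) is unimodular: Λ(C) equals its dual lattice, i.e. Λ(C) = {x ∈ ℝ^c : ∀ y ∈ Λ(C), ⟨x, y⟩ ∈ ℤ}, where ⟨·,·⟩ is the standard Euclidean inner product. -/
open scoped BigOperators

noncomputable section

/-- The standard Euclidean inner product on `ℝ^c`. -/
def inn {c : ℕ} (x y : Fin c → ℝ) : ℝ := ∑ i, x i * y i

/-- The dual of a ternary code `C ⊆ (ZMod 3)^c`. -/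
def dualCode {c : ℕ} (C : Submodule (ZMod 3) (Fin c → ZMod 3)) : Set (Fin c → ZMod 3) :=
  {w | ∀ v ∈ C, ∑ i, w i * v i = 0}

/-- A ternary code is self-dual if it equals its dual code. -/
def IsSelfDual {c : ℕ} (C : Submodule (ZMod 3) (Fin c → ZMod 3)) : Prop :=
  (C : Set (Fin c → ZMod 3)) = dualCode C

/-- The 3-framed lattice `Λ(C)` associated to a ternary code `C`:
all vectors `(1/√3)·u` with `u ∈ ℤ^c` whose mod-3 reduction lies in `C`. -/
def latticeOf {c : ℕ} (C : Submodule (ZMod 3) (Fin c → ZMod 3)) : Set (Fin c → ℝ) :=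
  {x | ∃ u : Fin c → ℤ, (fun i => ((u i : ZMod 3))) ∈ C ∧
    x = fun i => (u i : ℝ) / Real.sqrt 3}

theorem latticeOf_unimodular {c : ℕ}
    (C : Submodule (ZMod 3) (Fin c → ZMod 3)) (hC : IsSelfDual C) :
    latticeOf C = {x : Fin c → ℝ | ∀ y ∈ latticeOf C, ∃ n : ℤ, inn x y = (n : ℝ)} := by
  have h3 : Real.sqrt 3 * Real.sqrt 3 = 3 := Real.mul_self_sqrt (by norm_num)
  have h3ne : Real.sqrt 3 ≠ 0 := by positivity
  have key : ∀ u v : Fin c → ℤ,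
      inn (fun i => (u i : ℝ) / Real.sqrt 3) (fun i => (v i : ℝ) / Real.sqrt 3)
        = ((∑ i, u i * v i : ℤ) : ℝ) / 3 := by
    intro u v
    unfold inn
    rw [Int.cast_sum, Finset.sum_div]
    congr 1 with i
    rw [div_mul_div_comm, h3]
    push_cast
    ring
  ext x
  constructor
  · rintro ⟨u, hu, rfl⟩ y ⟨v, hv, rfl⟩
    rw [key]
    have hdvd : (3 : ℤ) ∣ ∑ i, u i * v i := by
      have hud : (fun i => ((u i : ZMod 3))) ∈ dualCode C := by
        rw [← hC]; exact hu
      have := hud _ hv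
      have hz : ((∑ i, u i * v i : ℤ) : ZMod 3) = 0 := by
        push_cast
        exact this
      exact (ZMod.intCast_zmod_eq_zero_iff_dvd _ 3).1 hz
    obtain ⟨n, hn⟩ := hdvd
    exact ⟨n, by rw [hn]; push_cast; ring⟩
  · intro hx
    have h33 : (3 : ℝ) / Real.sqrt 3 = Real.sqrt 3 := by
      rw [div_eq_iff h3ne, h3]
    have hcoord : ∀ i : Fin c, ∃ n : ℤ, x i = (n : ℝ) / Real.sqrt 3 := by
      intro i
      set e : Fin c → ℤ := fun j => if j = i then 3 else 0 with he
      have hy : (fun j => (e j : ℝ) / Real.sqrt 3) ∈ latticeOf C := by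
        refine ⟨e, ?_, rfl⟩
        have : (fun j => ((e j : ZMod 3))) = 0 := by
          funext j
          simp only [he, Pi.zero_apply]
          split <;> decide
        rw [this]; exact C.zero_mem
      obtain ⟨n, hn⟩ := hx _ hy
      refine ⟨n, ?_⟩
      unfold inn at hn
      have hsum : ∑ j, x j * ((e j : ℝ) / Real.sqrt 3)
          = x i * (3 / Real.sqrt 3) := by
        rw [Finset.sum_eq_single i]
        · simp [he]
        · intro j _ hj; simp [he, hj]
        · simp
      rw [hsum, h33] at hn
      rw [eq_div_iff h3ne]
      exact hn
    choose n hn using hcoord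
    refine ⟨n, ?_, funext hn⟩
    rw [← SetLike.mem_coe, hC]
    intro v hv
    set w : Fin c → ℤ := fun i => ((v i).val : ℤ) with hw
    have hwv : (fun i => ((w i : ZMod 3))) = v := by
      funext i
      simp [hw, ZMod.natCast_val, ZMod.cast_id]
    have hyL : (fun i => (w i : ℝ) / Real.sqrt 3) ∈ latticeOf C :=
      ⟨w, by rw [hwv]; exact hv, rfl⟩
    obtain ⟨m, hm⟩ := hx _ hyL
    have hx' : x = fun i => (n i : ℝ) / Real.sqrt 3 := funext hn
    rw [hx', key] at hm
    have hZ : (∑ i, n i * w i : ℤ) = m * 3 := by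
      have h1 := (div_eq_iff (by norm_num : (3:ℝ) ≠ 0)).1 hm
      exact_mod_cast h1
    have h30 : ((3 : ℤ) : ZMod 3) = 0 := by decide
    have hz : ((∑ i, n i * w i : ℤ) : ZMod 3) = 0 := by
      rw [hZ, Int.cast_mul, h30, mul_zero]
    calc ∑ i, (n i : ZMod 3) * v i
        = ∑ i, (n i : ZMod 3) * ((w i : ℤ) : ZMod 3) := by
          rw [← hwv]
      _ = ((∑ i, n i * w i : ℤ) : ZMod 3) := by push_cast; ring
      _ = 0 := hz
end
end

section
/- Let C ⊆ (ZMod 3)^c be a linear ternary code with C ⊆ C⊥, and let χ = √3·(1,1,…,1) ∈ ℝ^c. Then χ ∈ Λ(C) and χ is a characteristic vector of Λ(C): for every λ ∈ Λ(C), both ⟨χ, λ⟩ and ⟨λ, λ⟩ are integers and ⟨χ, λ⟩ ≡ ⟨λ, λ⟩ (mod 2). -/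
open scoped BigOperators

noncomputable section

/-- The vector `χ = √3·(1,1,…,1) ∈ ℝ^c`. -/
def theChi (c : ℕ) : Fin c → ℝ := fun _ => Real.sqrt 3

theorem chi_characteristic {c : ℕ}
    (C : Submodule (ZMod 3) (Fin c → ZMod 3)) (hC : (C : Set (Fin c → ZMod 3)) ⊆ dualCode C) :
    theChi c ∈ latticeOf C ∧
      ∀ l ∈ latticeOf C, ∃ a b : ℤ,
        inn (theChi c) l = (a : ℝ) ∧ inn l l = (b : ℝ) ∧ a ≡ b [ZMOD 2] := by
  have h3 : Real.sqrt 3 ≠ 0 := by positivity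
  have hsq : Real.sqrt 3 * Real.sqrt 3 = 3 :=
    Real.mul_self_sqrt (by norm_num)
  constructor
  · refine ⟨fun _ => 3, ?_, ?_⟩
    · have : (fun _ : Fin c => ((3 : ℤ) : ZMod 3)) = 0 := by
        funext i; show ((3 : ℤ) : ZMod 3) = 0; decide
      rw [this]; exact C.zero_mem
    · funext i
      simp only [theChi]
      field_simp
      rw [Real.sq_sqrt (by norm_num)]; norm_num
  · rintro l ⟨u, hu, rfl⟩
    set S : ℤ := ∑ i, u i * u i with hS
    have hdvd : (3 : ℤ) ∣ S := by
      have h0 := hC hu (fun i => (u i : ZMod 3)) hu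
      have : ((S : ZMod 3)) = 0 := by
        push_cast [hS]
        exact h0
      exact (ZMod.intCast_zmod_eq_zero_iff_dvd S 3).mp this
    obtain ⟨b, hb⟩ := hdvd
    refine ⟨∑ i, u i, b, ?_, ?_, ?_⟩
    · unfold inn theChi
      push_cast
      refine Finset.sum_congr rfl fun i _ => ?_
      field_simp
    · unfold inn
      have : ∀ i : Fin c, (u i : ℝ) / Real.sqrt 3 * ((u i : ℝ) / Real.sqrt 3)
          = (u i : ℝ) * (u i) / 3 := by
        intro i
        rw [div_mul_div_comm, hsq]
      rw [Finset.sum_congr rfl fun i _ => this i, ← Finset.sum_div]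
      have : ((S : ℝ)) = ∑ i, (u i : ℝ) * (u i) := by push_cast [hS]; ring
      rw [← this, hb]
      push_cast
      ring
    · have : ((∑ i, u i : ℤ) : ZMod 2) = ((b : ℤ) : ZMod 2) := by
        have hx : ∀ x : ZMod 2, x = x * x := by decide
        have h1 : ((∑ i, u i : ℤ) : ZMod 2) = ((S : ℤ) : ZMod 2) := by
          push_cast [hS]
          exact Finset.sum_congr rfl fun i _ => hx _
        rw [h1, hb]
        push_cast
        have h2 : ((3:ZMod 2)) = 1 := by decide
        rw [h2, one_mul]
      exact (ZMod.intCast_eq_intCast_iff _ _ _).mp this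
end
end

section
/- Let C ⊆ (ZMod 3)^c be a self-dual ternary code and χ = √3·(1,1,…,1) ∈ ℝ^c. Then: (i) for every λ ∈ Λ(C), 12·‖λ + χ/2‖² ≥ c; and (ii) the map w ↦ (1/(2√3))·ι(w) − χ/2, where ι : ZMod 3 → ℤ sends 0, 1, 2 to 0, 1, −1 and is applied coordinatewise, is a bijection from the set of maximal codewords of C onto the set {λ ∈ Λ(C) : 12·‖λ + χ/2‖² = c}. -/
open scoped BigOperators

noncomputable section

/-- A word is maximal if all of its coordinates are nonzero. -/
def IsMaximalWord {c : ℕ} (w : Fin c → ZMod 3) : Prop :=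
  ∀ i, w i ≠ 0

/-- The canonical injection `ι : ZMod 3 → ℤ` sending `0, 1, 2` to `0, 1, -1`. -/
def iota : ZMod 3 → ℤ := fun a => if a = 0 then 0 else if a = 1 then 1 else -1

lemma twelve_inn {c : ℕ} (u : Fin c → ℤ) :
    12 * inn ((fun i => (u i : ℝ)/Real.sqrt 3) + (1/2 : ℝ) • theChi c)
      ((fun i => (u i : ℝ)/Real.sqrt 3) + (1/2 : ℝ) • theChi c)
      = ((∑ i, (2 * u i + 3)^2 : ℤ) : ℝ) := by
  unfold inn theChi
  push_cast
  rw [Finset.mul_sum]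
  apply Finset.sum_congr rfl
  intro i _
  simp only [Pi.add_apply, Pi.smul_apply, smul_eq_mul]
  have hs : Real.sqrt 3 * Real.sqrt 3 = 3 := Real.mul_self_sqrt (by norm_num)
  have h0 : Real.sqrt 3 ≠ 0 := by positivity
  field_simp
  rw [Real.sq_sqrt (by norm_num : (0:ℝ) ≤ 3)]; ring

lemma odd_sq_ge (u : ℤ) : 1 ≤ (2*u+3)^2 := by
  rcases le_or_gt (-1) u with h | h
  · nlinarith
  · nlinarith

lemma odd_sq_eq (u : ℤ) (h : (2*u+3)^2 = 1) : u = -1 ∨ u = -2 := by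
  have h2 : (2*u+2)*(2*u+4) = 0 := by linear_combination h
  rcases mul_eq_zero.mp h2 with h3 | h3 <;> omega

lemma sum_ge {c : ℕ} (u : Fin c → ℤ) : (c : ℤ) ≤ ∑ i, (2*u i+3)^2 := by
  calc (c : ℤ) = ∑ _i : Fin c, 1 := by simp
  _ ≤ _ := Finset.sum_le_sum (fun i _ => odd_sq_ge (u i))

lemma sum_eq {c : ℕ} (u : Fin c → ℤ) (h : ∑ i, (2*u i+3)^2 = (c : ℤ)) :
    ∀ i, u i = -1 ∨ u i = -2 := by
  intro i
  apply odd_sq_eq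
  by_contra hne
  have h1 : 1 < (2*u i+3)^2 := lt_of_le_of_ne (odd_sq_ge _) (Ne.symm hne)
  have : (∑ _i : Fin c, (1:ℤ)) < ∑ i, (2*u i+3)^2 :=
    Finset.sum_lt_sum (fun j _ => odd_sq_ge (u j)) ⟨i, Finset.mem_univ i, h1⟩
  simp at this; omega

lemma iota_inj : ∀ a b : ZMod 3, iota a = iota b → a = b := by decide

lemma val_arith1 : (1:ℝ) / (2 * Real.sqrt 3) - Real.sqrt 3 / 2 = ((-1 : ℤ):ℝ) / Real.sqrt 3 := by
  have hs : Real.sqrt 3 * Real.sqrt 3 = 3 := Real.mul_self_sqrt (by norm_num)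
  have h0 : Real.sqrt 3 ≠ 0 := by positivity
  push_cast; field_simp; nlinarith [hs, Real.sqrt_nonneg 3]

lemma val_arith2 : ((-1:ℤ):ℝ) / (2 * Real.sqrt 3) - Real.sqrt 3 / 2 = ((-2 : ℤ):ℝ) / Real.sqrt 3 := by
  have hs : Real.sqrt 3 * Real.sqrt 3 = 3 := Real.mul_self_sqrt (by norm_num)
  have h0 : Real.sqrt 3 ≠ 0 := by positivity
  push_cast; field_simp; nlinarith [hs, Real.sqrt_nonneg 3]

theorem ground_states_biject_with_maximal_codewords {c : ℕ}
    (C : Submodule (ZMod 3) (Fin c → ZMod 3)) (hC : IsSelfDual C) :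
    (∀ l ∈ latticeOf C,
      (c : ℝ) ≤ 12 * inn (l + (1/2 : ℝ) • theChi c) (l + (1/2 : ℝ) • theChi c)) ∧
    Set.BijOn
      (fun w : Fin c → ZMod 3 => fun i : Fin c =>
        (iota (w i) : ℝ) / (2 * Real.sqrt 3) - Real.sqrt 3 / 2)
      {w : Fin c → ZMod 3 | w ∈ C ∧ IsMaximalWord w}
      {l : Fin c → ℝ | l ∈ latticeOf C ∧
        12 * inn (l + (1/2 : ℝ) • theChi c) (l + (1/2 : ℝ) • theChi c) = (c : ℝ)} := by
  have hcase : ∀ a : ZMod 3, a ≠ 0 → a = 1 ∨ a = 2 := by decide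
  constructor
  · rintro l ⟨u, hu, rfl⟩
    rw [twelve_inn]
    exact_mod_cast sum_ge u
  · refine ⟨?_, ?_, ?_⟩
    · rintro w ⟨hwC, hwmax⟩
      set u : Fin c → ℤ := fun i => if w i = 1 then -1 else -2 with hudef
      have himg : (fun i : Fin c => (iota (w i):ℝ)/(2*Real.sqrt 3) - Real.sqrt 3/2)
          = fun i => (u i : ℝ)/Real.sqrt 3 := by
        funext i
        rcases hcase (w i) (hwmax i) with h | h
        · have h1 : iota (w i) = 1 := by rw [h]; decide
          have h2 : u i = -1 := by simp [hudef, h]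
          rw [h1, h2]; exact_mod_cast val_arith1
        · have h1 : iota (w i) = -1 := by rw [h]; decide
          have h2 : u i = -2 := by simp [hudef, h]; decide
          rw [h1, h2]; exact_mod_cast val_arith2
      have hmem : (fun i => ((u i : ZMod 3))) = -w := by
        funext i
        rcases hcase (w i) (hwmax i) with h | h
        · have h2 : u i = -1 := by simp [hudef, h]
          rw [h2, Pi.neg_apply, h]; decide
        · have h2 : u i = -2 := by simp [hudef, h]; decide
          rw [h2, Pi.neg_apply, h]; decide
      constructor
      · exact ⟨u, by rw [hmem]; exact neg_mem hwC, by rw [← himg]⟩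
      · show 12 * inn ((fun i : Fin c => (iota (w i):ℝ)/(2*Real.sqrt 3) - Real.sqrt 3/2)
            + (1/2 : ℝ) • theChi c) ((fun i : Fin c => (iota (w i):ℝ)/(2*Real.sqrt 3)
            - Real.sqrt 3/2) + (1/2 : ℝ) • theChi c) = (c : ℝ)
        rw [himg, twelve_inn]
        have hone : ∀ i, (2 * u i + 3)^2 = 1 := by
          intro i
          rcases hcase (w i) (hwmax i) with h | h
          · have h2 : u i = -1 := by simp [hudef, h]
            rw [h2]; ring
          · have h2 : u i = -2 := by simp [hudef, h]; decide
            rw [h2]; ring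
        rw [Finset.sum_congr rfl (fun i _ => hone i)]
        simp
    · rintro w1 ⟨_, _⟩ w2 ⟨_, _⟩ heq
      funext i
      have h := congrFun heq i
      simp only at h
      have hs : (0:ℝ) < 2 * Real.sqrt 3 := by positivity
      have h3 : (iota (w1 i):ℝ)/(2*Real.sqrt 3) = (iota (w2 i):ℝ)/(2*Real.sqrt 3) := by
        linarith
      field_simp at h3
      exact iota_inj _ _ (by exact_mod_cast h3)
    · rintro l ⟨⟨u, huC, rfl⟩, hnorm⟩
      rw [twelve_inn] at hnorm
      have hu12 : ∀ i, u i = -1 ∨ u i = -2 := sum_eq u (by exact_mod_cast hnorm)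
      refine ⟨-(fun i => ((u i : ZMod 3))), ⟨neg_mem huC, ?_⟩, ?_⟩
      · intro i
        rcases hu12 i with h | h <;> rw [Pi.neg_apply, h] <;> decide
      · funext i
        simp only [Pi.neg_apply]
        rcases hu12 i with h | h
        · have h1 : -((u i : ZMod 3)) = 1 := by rw [h]; decide
          have h2 : iota 1 = 1 := by decide
          rw [h1, h2, h]; exact_mod_cast val_arith1
        · have h1 : -((u i : ZMod 3)) = 2 := by rw [h]; decide
          have h2 : iota 2 = -1 := by decide
          rw [h1, h2, h]; exact_mod_cast val_arith2
end
end

section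
/- Let Λ ⊆ ℝ^c be a full-rank integral unimodular lattice which is odd (some vector of Λ has odd square-length), let χ ∈ Λ be a characteristic vector, and let q be a real number with 0 < q < 1. With Λ_ev = {λ ∈ Λ : ⟨λ,λ⟩ even}, Λ_odd = {λ ∈ Λ : ⟨λ,λ⟩ odd}, Λ⁺ = Λ_ev ∪ (χ/2 + Λ_ev) and Λ⁻ = Λ_ev ∪ (χ/2 + Λ_odd), all three series below converge and ∑_{λ ∈ Λ} (−1)^{⟨χ, λ⟩} q^{4‖λ + χ/2‖²} = ∑_{μ ∈ Λ⁺} q^{4‖μ‖²} − ∑_{μ ∈ Λ⁻} q^{4‖μ‖²}, where all exponents 4‖λ + χ/2‖² and 4‖μ‖² are natural numbers. -/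
open scoped BigOperators

noncomputable section
set_option maxHeartbeats 1600000

/-- The set of lattice vectors of even square-length. -/
def evenPart {c : ℕ} (Λ : AddSubgroup (Fin c → ℝ)) : Set (Fin c → ℝ) :=
  {x | x ∈ Λ ∧ ∃ n : ℤ, inn x x = ((2 * n : ℤ) : ℝ)}

/-- The set of lattice vectors of odd square-length. -/
def oddPart {c : ℕ} (Λ : AddSubgroup (Fin c → ℝ)) : Set (Fin c → ℝ) :=
  {x | x ∈ Λ ∧ ∃ n : ℤ, inn x x = ((2 * n + 1 : ℤ) : ℝ)}

/-- The even neighbor `Λ⁺ = Λ_ev ∪ (χ/2 + Λ_ev)`. -/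
def plusNeighbor {c : ℕ} (Λ : AddSubgroup (Fin c → ℝ)) (χ : Fin c → ℝ) : Set (Fin c → ℝ) :=
  evenPart Λ ∪ (fun y => (1/2 : ℝ) • χ + y) '' evenPart Λ

/-- The even neighbor `Λ⁻ = Λ_ev ∪ (χ/2 + Λ_odd)`. -/
def minusNeighbor {c : ℕ} (Λ : AddSubgroup (Fin c → ℝ)) (χ : Fin c → ℝ) : Set (Fin c → ℝ) :=
  evenPart Λ ∪ (fun y => (1/2 : ℝ) • χ + y) '' oddPart Λ


lemma inn_self_nonneg {c : ℕ} (x : Fin c → ℝ) : 0 ≤ inn x x :=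
  Finset.sum_nonneg fun i _ => mul_self_nonneg _

lemma inn_smul_smul {c : ℕ} (r : ℝ) (x y : Fin c → ℝ) :
    inn (r • x) (r • y) = r ^ 2 * inn x y := by
  unfold inn
  rw [Finset.mul_sum]
  refine Finset.sum_congr rfl fun i _ => ?_
  simp [Pi.smul_apply, smul_eq_mul]; ring

lemma sq_apply_le_inn {c : ℕ} (x : Fin c → ℝ) (i : Fin c) : x i * x i ≤ inn x x :=
  Finset.single_le_sum (fun j _ => mul_self_nonneg (x j)) (Finset.mem_univ i)

lemma norm_le_sqrt_inn {c : ℕ} (x : Fin c → ℝ) : ‖x‖ ≤ Real.sqrt (inn x x) := by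
  refine pi_norm_le_iff_of_nonneg (Real.sqrt_nonneg _) |>.2 fun i => ?_
  have h1 : x i * x i ≤ inn x x := sq_apply_le_inn x i
  have := Real.sqrt_le_sqrt h1
  rwa [show x i * x i = (x i) ^ 2 by ring, Real.sqrt_sq_eq_abs] at this

/-- summability of products over pi types -/
lemma summable_pi_prod_fin {f : ℤ → ℝ} (hf : Summable f) (h0 : ∀ n, 0 ≤ f n) :
    ∀ n : ℕ, Summable (fun k : Fin n → ℤ => ∏ i, f (k i)) := by
  intro n
  induction n with
  | zero => exact .of_finite
  | succ n ih =>
    rw [← (Fin.consEquiv (fun _ : Fin (n+1) => ℤ)).summable_iff]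
    have : ((fun k : Fin (n+1) → ℤ => ∏ i, f (k i)) ∘ (Fin.consEquiv (fun _ : Fin (n+1) => ℤ)))
        = fun p : ℤ × (Fin n → ℤ) => f p.1 * ∏ i, f (p.2 i) := by
      funext p
      simp [Fin.prod_univ_succ]
    rw [this]
    exact Summable.mul_of_nonneg (g := fun k : Fin n → ℤ => ∏ i, f (k i)) hf ih
      (fun n => h0 n) (fun k => Finset.prod_nonneg fun i _ => h0 _)

lemma summable_pi_prod {ι : Type*} [Fintype ι] {f : ℤ → ℝ} (hf : Summable f)
    (h0 : ∀ n, 0 ≤ f n) : Summable (fun k : ι → ℤ => ∏ i, f (k i)) := by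
  classical
  rw [← (Equiv.arrowCongr (Fintype.equivFin ι) (Equiv.refl ℤ)).symm.summable_iff]
  have : ((fun k : ι → ℤ => ∏ i, f (k i)) ∘ (Equiv.arrowCongr (Fintype.equivFin ι) (Equiv.refl ℤ)).symm)
      = fun k : Fin (Fintype.card ι) → ℤ => ∏ i, f (k i) := by
    funext k
    exact Fintype.prod_equiv (Fintype.equivFin ι) _ _ fun i => by
      simp [Equiv.arrowCongr]
  rw [this]
  exact summable_pi_prod_fin hf h0 _

lemma summable_geom_int {q : ℝ} (hq0 : 0 < q) (hq1 : q < 1) :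
    Summable (fun n : ℤ => q ^ n.natAbs) := by
  refine Summable.of_nat_of_neg ?_ ?_ <;>
  · simpa using summable_geometric_of_lt_one hq0.le hq1

lemma core_summable {c : ℕ} (Λ : AddSubgroup (Fin c → ℝ)) (hDisc : DiscreteTopology Λ)
    (hInt : ∀ x ∈ Λ, ∀ y ∈ Λ, ∃ n : ℤ, inn x y = (n : ℝ))
    (hFull : Submodule.span ℝ (Λ : Set (Fin c → ℝ)) = ⊤)
    {q : ℝ} (hq0 : 0 < q) (hq1 : q < 1) :
    Summable (fun x : Λ => q ^ (⌊inn (x : Fin c → ℝ) (x : Fin c → ℝ)⌋).toNat) := by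
  classical
  set L : Submodule ℤ (Fin c → ℝ) := AddSubgroup.toIntSubmodule Λ with hLdef
  haveI : DiscreteTopology L := hDisc
  haveI : IsZLattice ℝ L := ⟨hFull⟩
  haveI : Module.Finite ℤ L := ZLattice.module_finite ℝ L
  haveI : Module.Free ℤ L := ZLattice.module_free ℝ L
  set b : Module.Basis (Module.Free.ChooseBasisIndex ℤ L) ℤ L := Module.Free.chooseBasis ℤ L with hbdef
  set ι := Module.Free.ChooseBasisIndex ℤ L
  set bR : Module.Basis ι ℝ (Fin c → ℝ) := b.ofZLatticeBasis ℝ L with hbRdef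
  set T : (Fin c → ℝ) →L[ℝ] (ι → ℝ) :=
    LinearMap.toContinuousLinearMap (bR.equivFun : (Fin c → ℝ) →ₗ[ℝ] (ι → ℝ)) with hTdef
  -- the integer coordinates
  set K : Λ → (ι → ℤ) := fun x i => b.repr ⟨(x : Fin c → ℝ), x.2⟩ i with hKdef
  have hKinj : Function.Injective K := by
    intro x y h
    have h1 : b.repr ⟨(x : Fin c → ℝ), x.2⟩ = b.repr ⟨(y : Fin c → ℝ), y.2⟩ :=
      Finsupp.ext fun i => congrFun h i
    have h2 := b.repr.injective h1
    exact Subtype.ext (congrArg Subtype.val h2)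
  have hKbound : ∀ (x : Λ) (i : ι), |((K x i : ℤ) : ℝ)| ≤ ‖T‖ * ‖(x : Fin c → ℝ)‖ := by
    intro x i
    have h1 : ((K x i : ℤ) : ℝ) = bR.repr (x : Fin c → ℝ) i := by
      rw [hKdef]
      exact (b.ofZLatticeBasis_repr_apply ℝ L ⟨(x : Fin c → ℝ), x.2⟩ i).symm
    have h2 : bR.repr (x : Fin c → ℝ) i = T (x : Fin c → ℝ) i := by
      rw [hTdef]
      simp [Module.Basis.equivFun_apply]
    rw [h1, h2, ← Real.norm_eq_abs]
    exact (norm_le_pi_norm _ i).trans (T.le_opNorm _)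
  -- the exponent
  set m : Λ → ℕ := fun x => (⌊inn (x : Fin c → ℝ) (x : Fin c → ℝ)⌋).toNat with hmdef
  have hm : ∀ x : Λ, (m x : ℝ) = inn (x : Fin c → ℝ) (x : Fin c → ℝ) := by
    intro x
    obtain ⟨n, hn⟩ := hInt _ x.2 _ x.2
    have hn0 : 0 ≤ n := by
      have := inn_self_nonneg (x : Fin c → ℝ)
      rw [hn] at this
      exact_mod_cast this
    rw [hmdef]
    simp only [hn, Int.floor_intCast]
    exact_mod_cast congrArg (fun z : ℤ => (z : ℝ)) (Int.toNat_of_nonneg hn0)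
  set A : ℝ := (Fintype.card ι) * (‖T‖ + 1) with hAdef
  have hA0 : 0 ≤ A := by positivity
  set D : ℕ := ⌈A ^ 2⌉₊ with hDdef
  set h : (ι → ℤ) → ℝ := fun k =>
    if (∑ i, (k i).natAbs) ≤ D then 1 else q ^ (∑ i, (k i).natAbs) with hhdef
  -- pointwise bound
  have hle : ∀ x : Λ, q ^ m x ≤ h (K x) := by
    intro x
    by_cases hc : (∑ i, (K x i).natAbs) ≤ D
    · rw [hhdef]
      simp only [hc, if_true]
      exact pow_le_one₀ hq0.le hq1.le
    · rw [hhdef]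
      simp only [hc, if_false]
      refine pow_le_pow_of_le_one hq0.le hq1.le ?_
      -- S ≤ m x
      set S : ℕ := ∑ i, (K x i).natAbs with hSdef
      have hxnorm : ‖(x : Fin c → ℝ)‖ ≤ Real.sqrt (m x) := by
        rw [hm x]
        exact norm_le_sqrt_inn _
      have hS1 : (S : ℝ) ≤ A * Real.sqrt (m x) := by
        rw [hSdef]
        push_cast
        have : ∀ i : ι, ((K x i).natAbs : ℝ) ≤ (‖T‖ + 1) * Real.sqrt (m x) := by
          intro i
          have h1 : ((K x i).natAbs : ℝ) = |((K x i : ℤ) : ℝ)| := by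
            rw [Nat.cast_natAbs]; push_cast; ring_nf
          rw [h1]
          calc |((K x i : ℤ) : ℝ)| ≤ ‖T‖ * ‖(x : Fin c → ℝ)‖ := hKbound x i
            _ ≤ (‖T‖ + 1) * Real.sqrt (m x) := by
                have h2 : (0:ℝ) ≤ ‖T‖ := norm_nonneg _
                nlinarith [norm_nonneg (x : Fin c → ℝ), Real.sqrt_nonneg ((m x : ℝ))]
        calc (∑ i, ((K x i).natAbs : ℝ)) ≤ ∑ _i : ι, (‖T‖ + 1) * Real.sqrt (m x) :=
              Finset.sum_le_sum fun i _ => this i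
          _ = A * Real.sqrt (m x) := by
              rw [Finset.sum_const, Finset.card_univ, nsmul_eq_mul, hAdef]; ring
      have hS2 : (S : ℝ) ^ 2 ≤ (D : ℝ) * m x := by
        have e1 : (S:ℝ)^2 ≤ (A * Real.sqrt (m x))^2 := by
          have : (0:ℝ) ≤ (S:ℝ) := by positivity
          nlinarith [hS1]
        have e2 : (A * Real.sqrt (m x))^2 = A^2 * (m x : ℝ) := by
          rw [mul_pow, Real.sq_sqrt (by positivity : (0:ℝ) ≤ (m x : ℝ))]
        have e3 : A^2 ≤ (D : ℝ) := Nat.le_ceil _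
        nlinarith [Nat.cast_nonneg (α := ℝ) (m x)]
      have hDS : (D : ℝ) + 1 ≤ S := by exact_mod_cast Nat.succ_le_of_lt (Nat.lt_of_not_le hc)
      have : (S : ℝ) ≤ m x := by
        nlinarith [Nat.cast_nonneg (α := ℝ) (m x), Nat.cast_nonneg (α := ℝ) D,
          Nat.cast_nonneg (α := ℝ) S]
      exact_mod_cast this
  -- summability of the dominating function
  have hg : Summable (fun k : ι → ℤ => q ^ (∑ i, (k i).natAbs)) := by
    have := summable_pi_prod (ι := ι) (summable_geom_int hq0 hq1)
      (fun n => pow_nonneg hq0.le _)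
    have heq : (fun k : ι → ℤ => ∏ i, q ^ (k i).natAbs)
        = fun k : ι → ℤ => q ^ (∑ i, (k i).natAbs) := by
      funext k
      rw [Finset.prod_pow_eq_pow_sum]
    rwa [heq] at this
  have hh : Summable h := by
    have hdiff : Summable (fun k : ι → ℤ => h k - q ^ (∑ i, (k i).natAbs)) := by
      refine summable_of_ne_finset_zero
        (s := Fintype.piFinset (fun _ : ι => Finset.Icc (-(D:ℤ)) (D:ℤ))) ?_
      intro k hk
      have : ¬ (∑ i, (k i).natAbs) ≤ D := by
        intro hcon
        apply hk
        rw [Fintype.mem_piFinset]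
        intro i
        rw [Finset.mem_Icc]
        have h1 : (k i).natAbs ≤ D :=
          le_trans (Finset.single_le_sum (f := fun j : ι => (k j).natAbs)
            (fun j _ => Nat.zero_le _) (Finset.mem_univ i)) hcon
        constructor
        · rw [neg_le]
          calc -k i ≤ |k i| := neg_le_abs _
            _ = ((k i).natAbs : ℤ) := (Int.abs_eq_natAbs _)
            _ ≤ (D : ℤ) := by exact_mod_cast h1
        · calc k i ≤ |k i| := le_abs_self _
            _ = ((k i).natAbs : ℤ) := (Int.abs_eq_natAbs _)
            _ ≤ (D : ℤ) := by exact_mod_cast h1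
      rw [hhdef]
      simp only [this, if_false]
      ring
    have : h = (fun k : ι → ℤ => h k - q ^ (∑ i, (k i).natAbs))
        + (fun k : ι → ℤ => q ^ (∑ i, (k i).natAbs)) := by
      funext k; simp
    rw [this]
    exact hdiff.add hg
  exact Summable.of_nonneg_of_le (fun x => pow_nonneg hq0.le _) hle (hh.comp_injective hKinj)

lemma inn_add_left {c : ℕ} (x y z : Fin c → ℝ) : inn (x + y) z = inn x z + inn y z := by
  unfold inn
  rw [← Finset.sum_add_distrib]
  refine Finset.sum_congr rfl fun i _ => ?_
  simp [Pi.add_apply]; ring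

lemma inn_double {c : ℕ} (y : Fin c → ℝ) : inn (y + y) (y + y) = 4 * inn y y := by
  have h : y + y = (2:ℝ) • y := by module
  rw [h, inn_smul_smul]; ring

lemma summable_subset' {β : Type*} {s t : Set β} (hst : s ⊆ t) {f : β → ℝ}
    (hf : Summable fun x : t => f ↑x) : Summable fun x : s => f ↑x :=
  hf.comp_injective (Set.inclusion_injective hst)

def Pfun {c : ℕ} (χ : Fin c → ℝ) (q : ℝ) : (Fin c → ℝ) → ℝ :=
  fun x => q ^ (⌊4 * inn (x + (1/2 : ℝ) • χ) (x + (1/2 : ℝ) • χ)⌋).toNat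

def Gfun {c : ℕ} (q : ℝ) : (Fin c → ℝ) → ℝ := fun x => q ^ (⌊4 * inn x x⌋).toNat

def Ffun {c : ℕ} (χ : Fin c → ℝ) (q : ℝ) : (Fin c → ℝ) → ℝ :=
  fun x => ((Int.negOnePow ⌊inn χ x⌋ : ℤˣ) : ℝ) * Pfun χ q x

theorem rr_partition_function_eq_difference_of_thetas {c : ℕ}
    (Λ : AddSubgroup (Fin c → ℝ))
    (hDisc : DiscreteTopology Λ)
    (hInt : ∀ x ∈ Λ, ∀ y ∈ Λ, ∃ n : ℤ, inn x y = (n : ℝ))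
    (hFull : Submodule.span ℝ (Λ : Set (Fin c → ℝ)) = ⊤)
    (hUni : (Λ : Set (Fin c → ℝ)) = {x : Fin c → ℝ | ∀ y ∈ Λ, ∃ n : ℤ, inn x y = (n : ℝ)})
    (hOdd : ∃ x ∈ Λ, ∃ n : ℤ, inn x x = (n : ℝ) ∧ Odd n)
    (χ : Fin c → ℝ) (hχ : χ ∈ Λ)
    (hchar : ∀ l ∈ Λ, ∃ a b : ℤ, inn χ l = (a : ℝ) ∧ inn l l = (b : ℝ) ∧ a ≡ b [ZMOD 2])
    (q : ℝ) (hq0 : 0 < q) (hq1 : q < 1) :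
    (∀ l ∈ Λ, ∃ n : ℕ,
      4 * inn (l + (1/2 : ℝ) • χ) (l + (1/2 : ℝ) • χ) = (n : ℝ)) ∧
    (∀ μ ∈ plusNeighbor Λ χ, ∃ n : ℕ, 4 * inn μ μ = (n : ℝ)) ∧
    (∀ μ ∈ minusNeighbor Λ χ, ∃ n : ℕ, 4 * inn μ μ = (n : ℝ)) ∧
    Summable (fun l : Λ => ((Int.negOnePow ⌊inn χ (l : Fin c → ℝ)⌋ : ℤˣ) : ℝ) *
      q ^ (⌊4 * inn ((l : Fin c → ℝ) + (1/2 : ℝ) • χ)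
              ((l : Fin c → ℝ) + (1/2 : ℝ) • χ)⌋).toNat) ∧
    Summable (fun μ : plusNeighbor Λ χ =>
      q ^ (⌊4 * inn (μ : Fin c → ℝ) (μ : Fin c → ℝ)⌋).toNat) ∧
    Summable (fun μ : minusNeighbor Λ χ =>
      q ^ (⌊4 * inn (μ : Fin c → ℝ) (μ : Fin c → ℝ)⌋).toNat) ∧
    (∑' l : Λ, ((Int.negOnePow ⌊inn χ (l : Fin c → ℝ)⌋ : ℤˣ) : ℝ) *
        q ^ (⌊4 * inn ((l : Fin c → ℝ) + (1/2 : ℝ) • χ)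
                ((l : Fin c → ℝ) + (1/2 : ℝ) • χ)⌋).toNat)
      = (∑' μ : plusNeighbor Λ χ, q ^ (⌊4 * inn (μ : Fin c → ℝ) (μ : Fin c → ℝ)⌋).toNat)
        - (∑' μ : minusNeighbor Λ χ, q ^ (⌊4 * inn (μ : Fin c → ℝ) (μ : Fin c → ℝ)⌋).toNat) := by
  classical
  have hχ2 : (1/2:ℝ) • χ + (1/2:ℝ) • χ = χ := by module
  have hmem2 : ∀ l, l ∈ Λ → (l + (1/2:ℝ) • χ) + (l + (1/2:ℝ) • χ) ∈ Λ := by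
    intro l hl
    have he : (l + (1/2:ℝ) • χ) + (l + (1/2:ℝ) • χ) = l + l + χ := by module
    rw [he]; exact add_mem (add_mem hl hl) hχ
  have hmemPlus : ∀ μ ∈ plusNeighbor Λ χ, μ + μ ∈ Λ := by
    rintro μ (hμ | ⟨y, hy, rfl⟩)
    · exact add_mem hμ.1 hμ.1
    · have he : ((1/2:ℝ) • χ + y) + ((1/2:ℝ) • χ + y) = χ + (y + y) := by module
      rw [he]; exact add_mem hχ (add_mem hy.1 hy.1)
  have hmemMinus : ∀ μ ∈ minusNeighbor Λ χ, μ + μ ∈ Λ := by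
    rintro μ (hμ | ⟨y, hy, rfl⟩)
    · exact add_mem hμ.1 hμ.1
    · have he : ((1/2:ℝ) • χ + y) + ((1/2:ℝ) • χ + y) = χ + (y + y) := by module
      rw [he]; exact add_mem hχ (add_mem hy.1 hy.1)
  have exN : ∀ μ : Fin c → ℝ, μ + μ ∈ Λ → ∃ n : ℕ, 4 * inn μ μ = (n : ℝ) := by
    intro μ h
    obtain ⟨z, hz⟩ := hInt _ h _ h
    have h4 : 4 * inn μ μ = (z : ℝ) := by rw [← inn_double, hz]
    have hz0 : 0 ≤ z := by
      have h5 := inn_self_nonneg μ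
      have : (0:ℝ) ≤ (z:ℝ) := by nlinarith
      exact_mod_cast this
    refine ⟨z.toNat, ?_⟩
    rw [h4]
    exact_mod_cast (congrArg (fun t : ℤ => (t : ℝ)) (Int.toNat_of_nonneg hz0)).symm
  -- floor of the exponents
  have hfloor : ∀ μ : Fin c → ℝ, μ + μ ∈ Λ →
      ((⌊4 * inn μ μ⌋).toNat : ℝ) = 4 * inn μ μ := by
    intro μ h
    obtain ⟨n, hn⟩ := exN μ h
    rw [hn, Int.floor_natCast, Int.toNat_natCast]
  -- injectivity of doubling
  have hdblinj : ∀ u v : Fin c → ℝ, u + u = v + v → u = v := by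
    intro u v h
    have h2 : (2:ℝ) • u = (2:ℝ) • v := by rw [two_smul, two_smul]; exact h
    exact smul_right_injective (Fin c → ℝ) (by norm_num : (2:ℝ) ≠ 0) h2
  -- core summability
  have core := core_summable Λ hDisc hInt hFull hq0 hq1
  -- summability of the unsigned Λ-sum
  have s4' : Summable (fun l : Λ => Pfun χ q (l : Fin c → ℝ)) := by
    have hinj : Function.Injective
        (fun l : Λ => (⟨(l : Fin c → ℝ) + (l : Fin c → ℝ) + χ,
          add_mem (add_mem l.2 l.2) hχ⟩ : Λ)) := by
      intro x y h
      have h1 := congrArg Subtype.val h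
      simp only at h1
      have h2 : (x : Fin c → ℝ) + (x : Fin c → ℝ) = (y : Fin c → ℝ) + (y : Fin c → ℝ) := by
        have := add_right_cancel h1
        exact this
      exact Subtype.ext (hdblinj _ _ h2)
    have := core.comp_injective hinj
    have heq : ((fun x : Λ => q ^ (⌊inn (x : Fin c → ℝ) (x : Fin c → ℝ)⌋).toNat) ∘
        (fun l : Λ => (⟨(l : Fin c → ℝ) + (l : Fin c → ℝ) + χ,
          add_mem (add_mem l.2 l.2) hχ⟩ : Λ)))
        = fun l : Λ => Pfun χ q (l : Fin c → ℝ) := by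
      funext l
      show q ^ (⌊inn ((l : Fin c → ℝ) + (l : Fin c → ℝ) + χ)
          ((l : Fin c → ℝ) + (l : Fin c → ℝ) + χ)⌋).toNat = Pfun χ q (l : Fin c → ℝ)
      unfold Pfun
      rw [show (l : Fin c → ℝ) + (l : Fin c → ℝ) + χ
          = ((l : Fin c → ℝ) + (1/2:ℝ) • χ) + ((l : Fin c → ℝ) + (1/2:ℝ) • χ) by module,
        inn_double]
    rwa [heq] at this
  have s4 : Summable (fun l : Λ => Ffun χ q (l : Fin c → ℝ)) := by
    refine Summable.of_norm ?_
    have heq : (fun l : Λ => ‖Ffun χ q (l : Fin c → ℝ)‖)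
        = fun l : Λ => Pfun χ q (l : Fin c → ℝ) := by
      funext l
      rw [show Ffun χ q (l : Fin c → ℝ)
          = ((Int.negOnePow ⌊inn χ (l : Fin c → ℝ)⌋ : ℤˣ) : ℝ) * Pfun χ q (l : Fin c → ℝ)
          from rfl, norm_mul]
      have h1 : ‖((Int.negOnePow ⌊inn χ (l : Fin c → ℝ)⌋ : ℤˣ) : ℝ)‖ = 1 := by
        rcases Int.units_eq_one_or (Int.negOnePow ⌊inn χ (l : Fin c → ℝ)⌋) with h | h <;>
          rw [h] <;> simp
      rw [h1, one_mul, Real.norm_eq_abs, abs_of_nonneg]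
      unfold Pfun; positivity
    rw [heq]; exact s4'
  -- summability on the neighbors
  have hsubPlus : ∀ μ : plusNeighbor Λ χ, (μ : Fin c → ℝ) + (μ : Fin c → ℝ) ∈ Λ :=
    fun μ => hmemPlus _ μ.2
  have hsubMinus : ∀ μ : minusNeighbor Λ χ, (μ : Fin c → ℝ) + (μ : Fin c → ℝ) ∈ Λ :=
    fun μ => hmemMinus _ μ.2
  have s5 : Summable (fun μ : plusNeighbor Λ χ => Gfun q (μ : Fin c → ℝ)) := by
    have hinj : Function.Injective
        (fun μ : plusNeighbor Λ χ =>
          (⟨(μ : Fin c → ℝ) + (μ : Fin c → ℝ), hsubPlus μ⟩ : Λ)) := by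
      intro x y h
      exact Subtype.ext (hdblinj _ _ (congrArg Subtype.val h))
    have := core.comp_injective hinj
    have heq : ((fun x : Λ => q ^ (⌊inn (x : Fin c → ℝ) (x : Fin c → ℝ)⌋).toNat) ∘
        (fun μ : plusNeighbor Λ χ =>
          (⟨(μ : Fin c → ℝ) + (μ : Fin c → ℝ), hsubPlus μ⟩ : Λ)))
        = fun μ : plusNeighbor Λ χ => Gfun q (μ : Fin c → ℝ) := by
      funext μ
      show q ^ (⌊inn ((μ : Fin c → ℝ) + (μ : Fin c → ℝ))
          ((μ : Fin c → ℝ) + (μ : Fin c → ℝ))⌋).toNat = Gfun q (μ : Fin c → ℝ)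
      unfold Gfun
      rw [inn_double]
    rwa [heq] at this
  have s6 : Summable (fun μ : minusNeighbor Λ χ => Gfun q (μ : Fin c → ℝ)) := by
    have hinj : Function.Injective
        (fun μ : minusNeighbor Λ χ =>
          (⟨(μ : Fin c → ℝ) + (μ : Fin c → ℝ), hsubMinus μ⟩ : Λ)) := by
      intro x y h
      exact Subtype.ext (hdblinj _ _ (congrArg Subtype.val h))
    have := core.comp_injective hinj
    have heq : ((fun x : Λ => q ^ (⌊inn (x : Fin c → ℝ) (x : Fin c → ℝ)⌋).toNat) ∘
        (fun μ : minusNeighbor Λ χ =>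
          (⟨(μ : Fin c → ℝ) + (μ : Fin c → ℝ), hsubMinus μ⟩ : Λ)))
        = fun μ : minusNeighbor Λ χ => Gfun q (μ : Fin c → ℝ) := by
      funext μ
      show q ^ (⌊inn ((μ : Fin c → ℝ) + (μ : Fin c → ℝ))
          ((μ : Fin c → ℝ) + (μ : Fin c → ℝ))⌋).toNat = Gfun q (μ : Fin c → ℝ)
      unfold Gfun
      rw [inn_double]
    rwa [heq] at this
  refine ⟨fun l hl => exN _ (hmem2 l hl), fun μ hμ => exN μ (hmemPlus μ hμ),
    fun μ hμ => exN μ (hmemMinus μ hμ), s4, s5, s6, ?_⟩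
  -- half of χ is not in the lattice
  have hhalfnot : (1/2:ℝ) • χ ∉ Λ := by
    intro hh
    obtain ⟨x, hx, n, hn, hodd⟩ := hOdd
    obtain ⟨a, b, ha, hb, hab⟩ := hchar x hx
    obtain ⟨mz, hm⟩ := hInt _ hh _ hx
    have hbn : b = n := Int.cast_injective (α := ℝ) (hb.symm.trans hn)
    have haz : a = 2 * mz := by
      apply Int.cast_injective (α := ℝ)
      rw [← ha]
      calc inn χ x = inn ((1/2:ℝ) • χ + (1/2:ℝ) • χ) x := by rw [hχ2]
        _ = inn ((1/2:ℝ) • χ) x + inn ((1/2:ℝ) • χ) x := inn_add_left _ _ _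
        _ = ((2 * mz : ℤ) : ℝ) := by rw [hm]; push_cast; ring
    have hmod : a % 2 = b % 2 := hab
    obtain ⟨k, hk⟩ := hodd
    omega
  -- partition of the lattice
  have hULam : (Λ : Set (Fin c → ℝ)) = evenPart Λ ∪ oddPart Λ := by
    ext x
    simp only [Set.mem_union]
    constructor
    · intro hx
      obtain ⟨n, hn⟩ := hInt x hx x hx
      rcases Int.even_or_odd n with ⟨k, hk⟩ | ⟨k, hk⟩
      · exact Or.inl ⟨hx, k, by rw [hn]; norm_cast; try omega⟩
      · exact Or.inr ⟨hx, k, by rw [hn]; norm_cast; try omega⟩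
    · rintro (h | h) <;> exact h.1
  have hdEO : Disjoint (evenPart Λ) (oddPart Λ) := by
    rw [Set.disjoint_left]
    rintro x ⟨-, nE, hE⟩ ⟨-, nO, hO⟩
    have h1 : (2 * nE : ℤ) = 2 * nO + 1 := Int.cast_injective (α := ℝ) (hE.symm.trans hO)
    omega
  have hdτ : ∀ S : Set (Fin c → ℝ), S ⊆ (Λ : Set (Fin c → ℝ)) →
      Disjoint (evenPart Λ) ((fun y => (1/2:ℝ) • χ + y) '' S) := by
    intro S hS
    rw [Set.disjoint_left]
    rintro x hxE ⟨y, hy, rfl⟩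
    refine hhalfnot ?_
    have he : (1/2:ℝ) • χ = ((1/2:ℝ) • χ + y) - y := by abel
    rw [he]
    exact sub_mem hxE.1 (hS hy)
  have hτinj : Function.Injective (fun y : Fin c → ℝ => (1/2:ℝ) • χ + y) :=
    fun a b h => by simpa using h
  -- sign lemmas
  have hsgnE : ∀ x, x ∈ evenPart Λ → ((Int.negOnePow ⌊inn χ x⌋ : ℤˣ) : ℝ) = 1 := by
    rintro x ⟨hxΛ, n, hn⟩
    obtain ⟨a, b, ha, hb, hab⟩ := hchar x hxΛ
    have hba : b = 2 * n := Int.cast_injective (α := ℝ) (hb.symm.trans hn)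
    have hmod : a % 2 = b % 2 := hab
    have ha2 : Even a := by rw [Int.even_iff]; omega
    rw [ha, Int.floor_intCast, Int.negOnePow_even a ha2]
    try simp
  have hsgnO : ∀ x, x ∈ oddPart Λ → ((Int.negOnePow ⌊inn χ x⌋ : ℤˣ) : ℝ) = -1 := by
    rintro x ⟨hxΛ, n, hn⟩
    obtain ⟨a, b, ha, hb, hab⟩ := hchar x hxΛ
    have hba : b = 2 * n + 1 := Int.cast_injective (α := ℝ) (hb.symm.trans hn)
    have hmod : a % 2 = b % 2 := hab
    have ha2 : Odd a := by rw [Int.odd_iff]; omega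
    rw [ha, Int.floor_intCast, Int.negOnePow_odd a ha2]
    try simp
  -- subset relations
  have hEsub : evenPart Λ ⊆ (Λ : Set (Fin c → ℝ)) := fun x hx => hx.1
  have hOsub : oddPart Λ ⊆ (Λ : Set (Fin c → ℝ)) := fun x hx => hx.1
  -- restricted summabilities
  have s4set : Summable (fun x : (Λ : Set (Fin c → ℝ)) => Ffun χ q (x : Fin c → ℝ)) := s4
  have sFE : Summable (fun x : evenPart Λ => Ffun χ q (x : Fin c → ℝ)) :=
    summable_subset' (f := Ffun χ q) hEsub s4set
  have sFO : Summable (fun x : oddPart Λ => Ffun χ q (x : Fin c → ℝ)) :=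
    summable_subset' (f := Ffun χ q) hOsub s4set
  have sGE : Summable (fun x : evenPart Λ => Gfun q (x : Fin c → ℝ)) :=
    summable_subset' (f := Gfun q) (Set.subset_union_left :
      evenPart Λ ⊆ plusNeighbor Λ χ) s5
  have sGτE : Summable (fun x : ((fun y => (1/2:ℝ) • χ + y) '' evenPart Λ) =>
      Gfun q (x : Fin c → ℝ)) :=
    summable_subset' (f := Gfun q) (Set.subset_union_right :
      (fun y => (1/2:ℝ) • χ + y) '' evenPart Λ ⊆ plusNeighbor Λ χ) s5
  have sGτO : Summable (fun x : ((fun y => (1/2:ℝ) • χ + y) '' oddPart Λ) =>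
      Gfun q (x : Fin c → ℝ)) :=
    summable_subset' (f := Gfun q) (Set.subset_union_right :
      (fun y => (1/2:ℝ) • χ + y) '' oddPart Λ ⊆ minusNeighbor Λ χ) s6
  -- translation identity
  have hGP : ∀ x : Fin c → ℝ, Gfun q ((1/2:ℝ) • χ + x) = Pfun χ q x := by
    intro x
    unfold Gfun Pfun
    rw [add_comm]
  -- LHS computation
  have hLHS : (∑' l : Λ, Ffun χ q (l : Fin c → ℝ))
      = (∑' x : evenPart Λ, Pfun χ q (x : Fin c → ℝ))
        - (∑' x : oddPart Λ, Pfun χ q (x : Fin c → ℝ)) := by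
    have h0 : (∑' l : Λ, Ffun χ q (l : Fin c → ℝ))
        = ∑' x : ((evenPart Λ ∪ oddPart Λ : Set (Fin c → ℝ))), Ffun χ q (x : Fin c → ℝ) :=
      tsum_congr_set_coe _ hULam
    rw [h0, Summable.tsum_union_disjoint (f := Ffun χ q) hdEO sFE sFO]
    have hE : (∑' x : evenPart Λ, Ffun χ q (x : Fin c → ℝ))
        = ∑' x : evenPart Λ, Pfun χ q (x : Fin c → ℝ) :=
      tsum_congr fun x => by
        rw [show Ffun χ q (x : Fin c → ℝ) = _ * Pfun χ q (x : Fin c → ℝ) from rfl,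
          hsgnE _ x.2, one_mul]
    have hO : (∑' x : oddPart Λ, Ffun χ q (x : Fin c → ℝ))
        = -∑' x : oddPart Λ, Pfun χ q (x : Fin c → ℝ) := by
      rw [← tsum_neg]
      exact tsum_congr fun x => by
        rw [show Ffun χ q (x : Fin c → ℝ) = _ * Pfun χ q (x : Fin c → ℝ) from rfl,
          hsgnO _ x.2]; ring
    rw [hE, hO]; ring
  -- RHS computations
  have hPlus : (∑' μ : plusNeighbor Λ χ, Gfun q (μ : Fin c → ℝ))
      = (∑' x : evenPart Λ, Gfun q (x : Fin c → ℝ))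
        + (∑' x : evenPart Λ, Pfun χ q (x : Fin c → ℝ)) := by
    rw [tsum_congr_set_coe (Gfun q)
        (show (plusNeighbor Λ χ : Set (Fin c → ℝ))
          = evenPart Λ ∪ (fun y => (1/2:ℝ) • χ + y) '' evenPart Λ from rfl),
      Summable.tsum_union_disjoint (f := Gfun q) (hdτ _ hEsub) sGE sGτE,
      tsum_image (Gfun q) (hτinj.injOn)]
    congr 1
    exact tsum_congr fun x => hGP _
  have hMinus : (∑' μ : minusNeighbor Λ χ, Gfun q (μ : Fin c → ℝ))
      = (∑' x : evenPart Λ, Gfun q (x : Fin c → ℝ))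
        + (∑' x : oddPart Λ, Pfun χ q (x : Fin c → ℝ)) := by
    rw [tsum_congr_set_coe (Gfun q)
        (show (minusNeighbor Λ χ : Set (Fin c → ℝ))
          = evenPart Λ ∪ (fun y => (1/2:ℝ) • χ + y) '' oddPart Λ from rfl),
      Summable.tsum_union_disjoint (f := Gfun q) (hdτ _ hOsub) sGE sGτO,
      tsum_image (Gfun q) (hτinj.injOn)]
    congr 1
    exact tsum_congr fun x => hGP _
  show (∑' l : Λ, Ffun χ q (l : Fin c → ℝ))
      = (∑' μ : plusNeighbor Λ χ, Gfun q (μ : Fin c → ℝ))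
        - (∑' μ : minusNeighbor Λ χ, Gfun q (μ : Fin c → ℝ))
  rw [hLHS, hPlus, hMinus]
  ring
end
end

section
/- Let k ≥ 1, c = 12k, and m = gcd(24, k), and suppose m is even. Let g = (σ, ε) be a signed permutation of the c coordinates (σ a permutation of Fin c and ε : Fin c → {1, −1}, acting on ℝ^c by (g·x)_i = ε_i · x_{σ⁻¹(i)}) such that g has order m, g^{m/2} acts as −1 (negation of every coordinate), and, if 3 divides m, the permutation part of g^{m/3} is a product of c/3 disjoint 3-cycles with no fixed points. Then, with χ = √3·(1,1,…,1) ∈ ℝ^c, the integer ⟨χ, χ − g(χ)⟩ is divisible by 4. -/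
open scoped BigOperators

noncomputable section

/-- A linear automorphism of `ℝ^c` is a signed coordinate permutation with permutation
part `σ` and sign part `ε` if it acts by `(g·x) i = ε i * x (σ⁻¹ i)`. -/
def IsSignedPerm {c : ℕ} (g : (Fin c → ℝ) ≃ₗ[ℝ] (Fin c → ℝ))
    (σ : Equiv.Perm (Fin c)) (ε : Fin c → ℝ) : Prop :=
  (∀ i, ε i = 1 ∨ ε i = -1) ∧ ∀ (x : Fin c → ℝ) (i : Fin c), g x i = ε i * x (σ⁻¹ i)

open scoped Classical

namespace SPaux

variable {c : ℕ}

lemma isSignedPerm_mul {g h : (Fin c → ℝ) ≃ₗ[ℝ] (Fin c → ℝ)} {σ τ : Equiv.Perm (Fin c)}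
    {ε δ : Fin c → ℝ} (hg : IsSignedPerm g σ ε) (hh : IsSignedPerm h τ δ) :
    IsSignedPerm (g * h) (σ * τ) (fun i => ε i * δ (σ⁻¹ i)) := by
  obtain ⟨hε, hga⟩ := hg
  obtain ⟨hδ, hha⟩ := hh
  constructor
  · intro i
    rcases hε i with h1 | h1 <;> rcases hδ (σ⁻¹ i) with h2 | h2 <;> simp only [h1, h2] <;> norm_num
  · intro x i
    have hmul : (g * h) x = g (h x) := rfl
    rw [hmul, hga, hha, mul_inv_rev, Equiv.Perm.mul_apply]
    ring

/-- The lift of a signed permutation to an honest permutation of `Fin c × Bool`. -/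
def liftPerm (σ : Equiv.Perm (Fin c)) (ε : Fin c → ℝ) : Equiv.Perm (Fin c × Bool) :=
  (Equiv.prodCongrRight fun i => if ε i = -1 then Equiv.swap false true else Equiv.refl Bool) *
    (Equiv.prodCongrLeft fun _ : Bool => σ)

lemma swap_bool_apply (b : Bool) : Equiv.swap false true b = !b := by
  cases b <;> simp

lemma liftPerm_apply (σ : Equiv.Perm (Fin c)) (ε : Fin c → ℝ) (p : Fin c × Bool) :
    liftPerm σ ε p = (σ p.1, if ε (σ p.1) = -1 then !p.2 else p.2) := by
  rcases p with ⟨i, b⟩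
  show ((Equiv.prodCongrRight fun i =>
      if ε i = -1 then Equiv.swap false true else Equiv.refl Bool) (σ i, b)) = _
  by_cases h : ε (σ i) = -1 <;> simp [h, swap_bool_apply]

lemma liftPerm_mul {σ τ : Equiv.Perm (Fin c)} {ε δ : Fin c → ℝ}
    (hε : ∀ i, ε i = 1 ∨ ε i = -1) (hδ : ∀ i, δ i = 1 ∨ δ i = -1) :
    liftPerm σ ε * liftPerm τ δ = liftPerm (σ * τ) (fun i => ε i * δ (σ⁻¹ i)) := by
  apply Equiv.ext
  rintro ⟨i, b⟩
  rw [Equiv.Perm.mul_apply, liftPerm_apply, liftPerm_apply, liftPerm_apply]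
  simp only [Equiv.Perm.mul_apply, fun x : Fin c => (Equiv.Perm.inv_eq_iff_eq.mpr rfl : σ⁻¹ (σ x) = x)]
  rcases hε (σ (τ i)) with h1 | h1 <;> rcases hδ (τ i) with h2 | h2 <;>
    simp only [h1, h2] <;> norm_num

lemma liftPerm_one_of (ε : Fin c → ℝ) (hε : ∀ i, ε i = 1) :
    liftPerm 1 ε = 1 := by
  apply Equiv.ext
  rintro ⟨i, b⟩
  rw [liftPerm_apply]
  simp [hε, show ¬(1:ℝ) = -1 by norm_num]

lemma isSignedPerm_pow {g : (Fin c → ℝ) ≃ₗ[ℝ] (Fin c → ℝ)} {σ : Equiv.Perm (Fin c)}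
    {ε : Fin c → ℝ} (hg : IsSignedPerm g σ ε) :
    ∀ n : ℕ, ∃ εn : Fin c → ℝ, IsSignedPerm (g ^ n) (σ ^ n) εn ∧
      (liftPerm σ ε) ^ n = liftPerm (σ ^ n) εn := by
  intro n
  induction n with
  | zero =>
    refine ⟨fun _ => 1, ⟨fun _ => Or.inl rfl, ?_⟩, ?_⟩
    · intro x i
      simp [pow_zero]
    · rw [pow_zero, pow_zero]
      exact (liftPerm_one_of _ fun _ => rfl).symm
  | succ n ih =>
    obtain ⟨εn, hεn, hlift⟩ := ih
    refine ⟨fun i => εn i * ε ((σ ^ n)⁻¹ i), ?_, ?_⟩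
    · have := isSignedPerm_mul hεn hg
      rwa [← pow_succ, ← pow_succ] at this
    · rw [pow_succ, pow_succ, hlift, liftPerm_mul hεn.1 hg.1]

lemma signedPerm_of_neg_one {G : (Fin c → ℝ) ≃ₗ[ℝ] (Fin c → ℝ)} {σ' : Equiv.Perm (Fin c)}
    {ε' : Fin c → ℝ} (h : IsSignedPerm G σ' ε') (hG : ∀ x : Fin c → ℝ, G x = -x) :
    σ' = 1 ∧ ∀ i, ε' i = -1 := by
  obtain ⟨hε, ha⟩ := h
  have hσ : ∀ j, σ' j = j := by
    intro j
    by_contra hne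
    have h1 := ha (Pi.single j 1) (σ' j)
    rw [hG] at h1
    rw [(Equiv.Perm.inv_eq_iff_eq.mpr rfl : σ'⁻¹ (σ' j) = j), Pi.single_eq_same, mul_one] at h1
    rw [Pi.neg_apply, Pi.single_eq_of_ne hne, neg_zero] at h1
    rcases hε (σ' j) with h2 | h2 <;> rw [h2] at h1 <;> norm_num at h1
  refine ⟨Equiv.ext hσ, fun i => ?_⟩
  have h1 := ha (Pi.single i 1) i
  rw [hG] at h1
  have hinv : σ'⁻¹ i = i := Equiv.Perm.inv_eq_iff_eq.mpr (hσ i).symm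
  rw [hinv, Pi.single_eq_same, mul_one, Pi.neg_apply, Pi.single_eq_same] at h1
  exact h1.symm

lemma signedPerm_of_one {G : (Fin c → ℝ) ≃ₗ[ℝ] (Fin c → ℝ)} {σ' : Equiv.Perm (Fin c)}
    {ε' : Fin c → ℝ} (h : IsSignedPerm G σ' ε') (hG : ∀ x : Fin c → ℝ, G x = x) :
    σ' = 1 ∧ ∀ i, ε' i = 1 := by
  obtain ⟨hε, ha⟩ := h
  have hσ : ∀ j, σ' j = j := by
    intro j
    by_contra hne
    have h1 := ha (Pi.single j 1) (σ' j)
    rw [hG] at h1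
    rw [(Equiv.Perm.inv_eq_iff_eq.mpr rfl : σ'⁻¹ (σ' j) = j), Pi.single_eq_same, mul_one] at h1
    rw [Pi.single_eq_of_ne hne] at h1
    rcases hε (σ' j) with h2 | h2 <;> rw [h2] at h1 <;> norm_num at h1
  refine ⟨Equiv.ext hσ, fun i => ?_⟩
  have h1 := ha (Pi.single i 1) i
  rw [hG] at h1
  have hinv : σ'⁻¹ i = i := Equiv.Perm.inv_eq_iff_eq.mpr (hσ i).symm
  rw [hinv, Pi.single_eq_same, mul_one] at h1
  exact h1.symm

/-- The key combinatorial lemma: a permutation `π` with `π ^ m = 1` and `π ^ (m/2)`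
fixed-point-free has even sign provided `2 ^ (a+1) ∣ card` for `a = v₂ m`. -/
lemma sign_eq_one_of_pow {α : Type*} [Fintype α] [DecidableEq α] (π : Equiv.Perm α)
    (m : ℕ) (hm0 : m ≠ 0) (hme : Even m) (h1 : π ^ m = 1)
    (h2 : ∀ p, (π ^ (m / 2)) p ≠ p)
    (hcard : ∀ a : ℕ, 2 ^ a ∣ m → 2 ^ (a + 1) ∣ Fintype.card α) :
    Equiv.Perm.sign π = 1 := by
  obtain ⟨a, m', hm'odd, hmeq⟩ := Nat.exists_eq_two_pow_mul_odd hm0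
  have ha : 1 ≤ a := by
    by_contra h
    interval_cases a
    · rw [hmeq, pow_zero, one_mul] at hme
      exact (Nat.not_even_iff_odd.2 hm'odd) hme
  have hhalf : m / 2 = 2 ^ (a - 1) * m' := by
    have : m = 2 * (2 ^ (a - 1) * m') := by
      rw [hmeq, ← mul_assoc, ← pow_succ']
      congr 2
      omega
    omega
  -- every cycle length is 2^a times an odd number
  have key : ∀ L ∈ π.cycleType, 2 ^ a ∣ L ∧ Odd (L / 2 ^ a) := by
    intro L hL
    have hL2 : 2 ≤ L := Equiv.Perm.two_le_of_mem_cycleType hL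
    rw [Equiv.Perm.cycleType_def, Multiset.mem_map] at hL
    obtain ⟨cc, hccmem, hccL⟩ := hL
    have hccmem' : cc ∈ π.cycleFactorsFinset := hccmem
    have hcyc : cc.IsCycle := (Equiv.Perm.mem_cycleFactorsFinset_iff.mp hccmem').1
    have hsupp : cc.support.Nonempty := by
      rw [← Finset.card_pos]
      simp only [Function.comp_apply] at hccL
      omega
    obtain ⟨x, hx⟩ := hsupp
    have hccx : cc = π.cycleOf x := Equiv.Perm.cycle_is_cycleOf hx hccmem'
    have hxcc : cc x ≠ x := Equiv.Perm.mem_support.mp hx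
    have horder : orderOf cc = L := by
      rw [hcyc.orderOf]
      simpa using hccL
    have hdvd : L ∣ m := by
      rw [← horder]
      apply orderOf_dvd_of_pow_eq_one
      rw [hcyc.pow_eq_one_iff' hxcc, hccx, Equiv.Perm.cycleOf_pow_apply_self, h1]
      rfl
    have hndvd : ¬ L ∣ m / 2 := by
      intro hdvd2
      have : cc ^ (m / 2) = 1 := by
        apply orderOf_dvd_iff_pow_eq_one.mp
        rw [horder]; exact hdvd2
      have hx2 : (π ^ (m / 2)) x = x := by
        rw [← Equiv.Perm.cycleOf_pow_apply_self, ← hccx, this]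
        rfl
      exact h2 x hx2
    -- now arithmetic
    obtain ⟨e, u, hu, hLeq⟩ := Nat.exists_eq_two_pow_mul_odd (by omega : L ≠ 0)
    have hLm : L ∣ 2 ^ a * m' := by rw [← hmeq]; exact hdvd
    have hudvd : u ∣ m' := by
      have : u ∣ 2 ^ a * m' := dvd_trans (by rw [hLeq]; exact dvd_mul_left u (2 ^ e)) hLm
      exact (Nat.Coprime.dvd_of_dvd_mul_left
        (Nat.Coprime.pow_right _ (Odd.coprime_two_right hu)) this)
    have hedvd : 2 ^ e ∣ 2 ^ a := by
      have h2u : 2 ^ e ∣ 2 ^ a * m' :=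
        dvd_trans (by rw [hLeq]; exact dvd_mul_right (2 ^ e) u) hLm
      exact (Nat.Coprime.dvd_of_dvd_mul_right
        (Nat.Coprime.pow_left _ (Nat.coprime_two_left.mpr hm'odd)) h2u)
    have hea : e ≤ a := (Nat.pow_dvd_pow_iff_le_right (by norm_num)).mp hedvd
    have heaeq : e = a := by
      by_contra hne
      have hlt : e ≤ a - 1 := by omega
      have : L ∣ m / 2 := by
        rw [hhalf, hLeq]
        exact Nat.mul_dvd_mul (pow_dvd_pow 2 hlt) hudvd
      exact hndvd this
    subst heaeq
    constructor
    · exact Dvd.intro _ (by rw [hLeq, mul_comm])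
    · rw [hLeq, Nat.mul_div_cancel_left _ (Nat.pow_pos (n := e) (by norm_num))]
      exact hu
  -- π is fixed-point-free
  have huniv : π.support = Finset.univ := by
    rw [Finset.eq_univ_iff_forall]
    intro p
    rw [Equiv.Perm.mem_support]
    intro hfix
    exact h2 p (Equiv.Perm.pow_apply_eq_self_of_apply_eq_self hfix _)
  have hsum : π.cycleType.sum = Fintype.card α := by
    rw [Equiv.Perm.sum_cycleType, huniv, Finset.card_univ]
  -- the number of cycles is even
  have hcards : Even (Multiset.card π.cycleType) := by
    have hmapodd : ∀ y ∈ π.cycleType.map (· / 2 ^ a), Odd y := by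
      intro y hy
      rw [Multiset.mem_map] at hy
      obtain ⟨L, hL, rfl⟩ := hy
      exact (key L hL).2
    have hsum2 : 2 ^ a * (π.cycleType.map (· / 2 ^ a)).sum = Fintype.card α := by
      rw [← Multiset.sum_map_mul_left, ← hsum]
      congr 1
      conv_rhs => rw [← Multiset.map_id π.cycleType]
      apply Multiset.map_congr rfl
      intro L hL
      exact (Nat.mul_div_cancel' (key L hL).1)
    have hevensum : Even ((π.cycleType.map (· / 2 ^ a)).sum) := by
      obtain ⟨w, hw⟩ := hcard a ⟨m', hmeq⟩
      rw [hw, pow_succ, mul_assoc] at hsum2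
      have := Nat.eq_of_mul_eq_mul_left (Nat.pow_pos (n := a) (by norm_num)) hsum2
      exact ⟨w, by omega⟩
    -- a multiset of odd numbers with even sum has even cardinality
    have gen : ∀ s : Multiset ℕ, (∀ y ∈ s, Odd y) → (Even s.sum ↔ Even (Multiset.card s)) := by
      intro s
      induction s using Multiset.induction_on with
      | empty => simp
      | cons x t ih =>
        intro hodd
        have hx : Odd x := hodd x (Multiset.mem_cons_self x t)
        have ht := ih fun y hy => hodd y (Multiset.mem_cons_of_mem hy)
        rw [Multiset.sum_cons, Multiset.card_cons]
        obtain ⟨j, hj⟩ := hx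
        constructor
        · intro he
          rw [Nat.even_add_one, ← ht]
          intro he2
          obtain ⟨w1, hw1⟩ := he
          obtain ⟨w2, hw2⟩ := he2
          omega
        · intro he
          rw [Nat.even_add_one] at he
          rw [← ht] at he
          rcases Nat.even_or_odd t.sum with h | h
          · exact absurd h he
          · obtain ⟨w2, hw2⟩ := h
            exact ⟨j + w2 + 1, by omega⟩
    have := (gen _ hmapodd).mp hevensum
    rwa [Multiset.card_map] at this
  rw [Equiv.Perm.sign_of_cycleType]
  have hevensum' : Even π.cycleType.sum := by
    rw [hsum]
    obtain ⟨w, hw⟩ := hcard 1 ((pow_one 2) ▸ hme.two_dvd)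
    exact ⟨2 ^ 1 * w, by rw [hw]; ring⟩
  exact Even.neg_one_pow (hevensum'.add hcards)

end SPaux

theorem signed_perm_majorana_layer_vanishes (k : ℕ) (hk : 1 ≤ k) (c m : ℕ)
    (hc : c = 12 * k) (hm : m = Nat.gcd 24 k) (hme : Even m)
    (g : (Fin c → ℝ) ≃ₗ[ℝ] (Fin c → ℝ))
    (hsp : ∃ σ : Equiv.Perm (Fin c), ∃ ε : Fin c → ℝ, IsSignedPerm g σ ε)
    (horder : orderOf g = m)
    (hhalf : ∀ x : Fin c → ℝ, (g ^ (m / 2)) x = -x)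
    (hthird : 3 ∣ m → ∃ σ' : Equiv.Perm (Fin c), ∃ ε' : Fin c → ℝ,
      IsSignedPerm (g ^ (m / 3)) σ' ε' ∧ σ' ^ 3 = 1 ∧ ∀ i, σ' i ≠ i) :
    ∃ n : ℤ,
      inn (fun _ => Real.sqrt 3) ((fun _ => Real.sqrt 3) - g (fun _ => Real.sqrt 3))
        = ((4 * n : ℤ) : ℝ) := by
  classical
  obtain ⟨σ, ε, hgsp⟩ := hsp
  have hε := hgsp.1
  have hm0 : m ≠ 0 := by
    rw [hm]
    have : 0 < Nat.gcd 24 k := Nat.gcd_pos_of_pos_left k (by norm_num)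
    omega
  have hmdvdk : m ∣ k := hm ▸ Nat.gcd_dvd_right 24 k
  set π := SPaux.liftPerm σ ε with hπ
  -- π ^ m = 1
  obtain ⟨εm, hεm, hliftm⟩ := SPaux.isSignedPerm_pow hgsp m
  have hgm : g ^ m = 1 := horder ▸ pow_orderOf_eq_one g
  have h1 : π ^ m = 1 := by
    rw [hliftm]
    rw [hgm] at hεm
    obtain ⟨hσm, hεm1⟩ := SPaux.signedPerm_of_one hεm (fun x => rfl)
    rw [hσm] at hliftm ⊢
    exact SPaux.liftPerm_one_of _ hεm1
  -- π ^ (m/2) is fixed-point-free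
  obtain ⟨εh, hεh, hlifth⟩ := SPaux.isSignedPerm_pow hgsp (m / 2)
  obtain ⟨hσh, hεh1⟩ := SPaux.signedPerm_of_neg_one hεh hhalf
  have h2 : ∀ p : Fin c × Bool, (π ^ (m / 2)) p ≠ p := by
    intro p
    rw [hlifth, hσh, SPaux.liftPerm_apply]
    rcases p with ⟨i, b⟩
    simp [hεh1]
  -- card condition
  have hcard : ∀ a : ℕ, 2 ^ a ∣ m → 2 ^ (a + 1) ∣ Fintype.card (Fin c × Bool) := by
    intro a hdvd
    have h2k : 2 ^ a ∣ k := dvd_trans hdvd hmdvdk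
    have : Fintype.card (Fin c × Bool) = 24 * k := by
      rw [Fintype.card_prod, Fintype.card_fin, Fintype.card_bool, hc]
      ring
    rw [this, pow_succ]
    obtain ⟨w, hw⟩ := h2k
    exact ⟨12 * w, by rw [hw]; ring⟩
  have hsign : Equiv.Perm.sign π = 1 :=
    SPaux.sign_eq_one_of_pow π m hm0 hme h1 h2 hcard
  -- compute the sign of π in terms of ε
  have hsignval : Equiv.Perm.sign π
      = (-1 : ℤˣ) ^ (Finset.univ.filter fun i => ε i = -1).card := by
    rw [hπ, SPaux.liftPerm, map_mul, Equiv.Perm.sign_prodCongrRight,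
      Equiv.Perm.sign_prodCongrLeft]
    have h3 : ∏ _b : Bool, Equiv.Perm.sign σ = 1 := by
      rw [Finset.prod_const]
      simp [Fintype.card_bool, sq, Int.units_mul_self]
    rw [h3, mul_one]
    have h4 : ∀ i : Fin c, Equiv.Perm.sign
        (if ε i = -1 then Equiv.swap false true else Equiv.refl Bool)
        = if ε i = -1 then (-1 : ℤˣ) else 1 := by
      intro i
      by_cases h : ε i = -1 <;> simp [h, Equiv.Perm.sign_swap]
    rw [Finset.prod_congr rfl fun i _ => h4 i]
    rw [Finset.prod_ite, Finset.prod_const, Finset.prod_const, one_pow, mul_one]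
  have hqeven : Even (Finset.univ.filter fun i => ε i = -1).card := by
    rw [hsignval] at hsign
    exact (neg_one_pow_eq_one_iff_even (by decide : (-1 : ℤˣ) ≠ 1)).mp hsign
  obtain ⟨t, ht⟩ := hqeven
  refine ⟨3 * t, ?_⟩
  have hsqrt : Real.sqrt 3 * Real.sqrt 3 = 3 := Real.mul_self_sqrt (by norm_num)
  have hstep : inn (fun _ => Real.sqrt 3) ((fun _ => Real.sqrt 3) - g (fun _ => Real.sqrt 3))
      = ∑ i : Fin c, (if ε i = -1 then (6 : ℝ) else 0) := by
    unfold inn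
    apply Finset.sum_congr rfl
    intro i _
    have hgi : (g fun _ => Real.sqrt 3) i = ε i * Real.sqrt 3 := by
      rw [hgsp.2]
    simp only [Pi.sub_apply, hgi]
    rcases hε i with h | h
    · rw [h, if_neg (by norm_num : ¬(1 : ℝ) = -1)]
      ring
    · rw [h, if_pos rfl]
      nlinarith [hsqrt]
  rw [hstep, Finset.sum_ite, Finset.sum_const, Finset.sum_const_zero, add_zero, ht,
    nsmul_eq_mul]
  push_cast
  ring
end
end
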